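/- For 1 ≤ t < m, the plurality scoring vector (1, 0, ..., 0) ∈ ℝ^m is not in the span of the vectors α^1, ..., α^t defined by α^k_j = C(j−1,k−1)·C(m−j,t−k), even after adding any constant vector; i.e., (1,0,...,0) ∉ span(α^1,...,α^t). -/

import Mathlib

open Polynomial

theorem plurality_not_mem_span_alpha (m t : ℕ) (ht1 : 1 ≤ t) (htm : t < m) :
    (fun j : Fin m => if j.val = 0 then (1 : ℝ) else 0) ∉
      Submodule.span ℝ (Set.range (fun k : Fin t => fun j : Fin m =>
        ((Nat.choose j.val k.val * Nat.choose (m - (j.val + 1)) (t - (k.val + 1)) : ℕ) : ℝ))) := by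
  intro h
  rw [Submodule.mem_span_range_iff_exists_fun] at h
  obtain ⟨c, hc⟩ := h
  set P : ℝ[X] := ∑ k : Fin t,
    Polynomial.C (c k / (Nat.factorial k.val * Nat.factorial (t - (k.val + 1)))) * descPochhammer ℝ k.val *
      (descPochhammer ℝ (t - (k.val + 1))).comp (Polynomial.C ((m : ℝ) - 1) - X) with hP
  -- evaluation formula
  have heval : ∀ j : ℕ, j < m → P.eval (j : ℝ) =
      ∑ k : Fin t, c k *
        ((Nat.choose j k.val * Nat.choose (m - (j + 1)) (t - (k.val + 1)) : ℕ) : ℝ) := by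
    intro j hj
    rw [hP, eval_finset_sum]
    refine Finset.sum_congr rfl fun k _ => ?_
    have hsub : ((m : ℝ) - 1) - (j : ℝ) = ((m - (j + 1) : ℕ) : ℝ) := by
      have : (j + 1) ≤ m := hj
      push_cast [Nat.cast_sub this]
      ring
    rw [eval_mul, eval_mul, eval_C, eval_comp, eval_sub, eval_C, eval_X, hsub,
      descPochhammer_eval_eq_descFactorial, descPochhammer_eval_eq_descFactorial,
      Nat.descFactorial_eq_factorial_mul_choose, Nat.descFactorial_eq_factorial_mul_choose]
    have h1 : (Nat.factorial k.val : ℝ) ≠ 0 := Nat.cast_ne_zero.2 (Nat.factorial_ne_zero _)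
    have h2 : ((Nat.factorial (t - (k.val + 1)) : ℕ) : ℝ) ≠ 0 := Nat.cast_ne_zero.2 (Nat.factorial_ne_zero _)
    push_cast
    field_simp
  -- evaluation agrees with plurality vector on Fin m
  have hval : ∀ j : Fin m, P.eval ((j : ℕ) : ℝ) = if j.val = 0 then (1 : ℝ) else 0 := by
    intro j
    rw [heval j j.isLt]
    have := congrFun hc j
    simpa [Finset.sum_apply, Pi.smul_apply, smul_eq_mul] using this
  -- degree bound
  have hdeg : P.natDegree ≤ t - 1 := by
    rw [hP]
    refine Polynomial.natDegree_sum_le_of_forall_le _ _ fun k _ => ?_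
    refine le_trans (natDegree_mul_le) ?_
    have hA : (Polynomial.C (c k / (Nat.factorial k.val * Nat.factorial (t - (k.val + 1)))) *
        descPochhammer ℝ k.val).natDegree ≤ k.val := by
      refine le_trans (natDegree_mul_le) ?_
      simp [descPochhammer_natDegree]
    have hB : ((descPochhammer ℝ (t - (k.val + 1))).comp
        (Polynomial.C ((m : ℝ) - 1) - X)).natDegree ≤ t - (k.val + 1) := by
      refine le_trans (natDegree_comp_le) ?_
      have : (Polynomial.C ((m : ℝ) - 1) - X).natDegree ≤ 1 := by
        refine le_trans (natDegree_sub_le _ _) (max_le ?_ ?_)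
        · exact (natDegree_C _).le.trans (Nat.zero_le 1)
        · exact natDegree_X_le
      calc (descPochhammer ℝ (t - (k.val + 1))).natDegree *
            (Polynomial.C ((m : ℝ) - 1) - X).natDegree
          ≤ (descPochhammer ℝ (t - (k.val + 1))).natDegree * 1 := by
            exact Nat.mul_le_mul_left _ this
        _ = t - (k.val + 1) := by simp [descPochhammer_natDegree]
    have hk : k.val < t := k.isLt
    calc _ ≤ k.val + (t - (k.val + 1)) := Nat.add_le_add hA hB
      _ ≤ t - 1 := by omega
  -- P vanishes at 1, ..., m-1
  have hzero : P = 0 := by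
    refine Polynomial.eq_zero_of_natDegree_lt_card_of_eval_eq_zero' P
      ((Finset.Ico 1 m).image (fun j : ℕ => (j : ℝ))) ?_ ?_
    · intro x hx
      obtain ⟨j, hj, rfl⟩ := Finset.mem_image.1 hx
      rw [Finset.mem_Ico] at hj
      have := hval ⟨j, hj.2⟩
      simpa [Nat.ne_zero_of_lt hj.1, (by omega : j ≠ 0)] using this
    · rw [Finset.card_image_of_injective _ Nat.cast_injective, Nat.card_Ico]
      omega
  have h0 : P.eval ((0 : ℕ) : ℝ) = 1 := by
    have := hval ⟨0, lt_of_le_of_lt (Nat.zero_le t) htm⟩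
    simpa using this
  rw [hzero] at h0
  simp at h0
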